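/- Let T = (T_1, ..., T_d) be a d-tuple of n×n complex matrices and λ ∈ [0,1]. Then ‖M_λ(T)‖_{s,2} ≤ (λ + (1-λ)√(min{n,d})) ‖T‖_{s,2}, where M_λ(T) = λT + (1-λ)T^D is the spherical λ-mean transform. -/

import Mathlib

open scoped Matrix ComplexOrder

/-- Real power of a matrix via the continuous functional calculus (for Hermitian matrices). -/
noncomputable def mpow {m : Type*} [Fintype m] [DecidableEq m]
    (A : Matrix m m ℂ) (t : ℝ) : Matrix m m ℂ :=
  cfc (fun x : ℝ => x ^ t) A

/-- The operator (spectral) norm of a matrix. -/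
noncomputable def opNorm {m : Type*} [Fintype m] [DecidableEq m] (A : Matrix m m ℂ) : ℝ :=
  ‖Matrix.toEuclideanCLM (𝕜 := ℂ) A‖

/-- The Schatten `p`-norm of a matrix: `(tr |A|^p)^{1/p}`. -/
noncomputable def schattenNorm {m : Type*} [Fintype m] [DecidableEq m]
    (p : ℝ) (A : Matrix m m ℂ) : ℝ :=
  ((mpow (Aᴴ * A) (p / 2)).trace.re) ^ (1 / p)

/-- The spherical Schatten `p`-norm of a tuple: `(tr (∑ S_i* S_i)^{p/2})^{1/p}`. -/
noncomputable def sphSchattenNorm {m : Type*} [Fintype m] [DecidableEq m] {d : ℕ}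
    (p : ℝ) (T : Fin d → Matrix m m ℂ) : ℝ :=
  ((mpow (∑ i, (T i)ᴴ * T i) (p / 2)).trace.re) ^ (1 / p)

section Helpers

variable {m : Type*} [Fintype m] [DecidableEq m]

omit [DecidableEq m] in
lemma inner_equiv_symm_aux (x y : m → ℂ) :
    inner ℂ ((WithLp.equiv 2 (m → ℂ)).symm x) ((WithLp.equiv 2 (m → ℂ)).symm y)
      = dotProduct (star x) y := by
  rw [dotProduct_comm]; rfl

omit [DecidableEq m] in
lemma quad_eq_normsq (W : Matrix m m ℂ) (x : m → ℂ) :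
    dotProduct (star x) ((Wᴴ * W) *ᵥ x)
      = (‖(WithLp.equiv 2 (m → ℂ)).symm (W *ᵥ x)‖ ^ 2 : ℝ) := by
  rw [← Matrix.mulVec_mulVec, Matrix.dotProduct_mulVec, ← Matrix.star_mulVec,
    ← inner_equiv_symm_aux, inner_self_eq_norm_sq_to_K]
  norm_num

omit [DecidableEq m] in
lemma dot_self_eq_normsq (x : m → ℂ) :
    dotProduct (star x) x
      = (‖(WithLp.equiv 2 (m → ℂ)).symm x‖ ^ 2 : ℝ) := by
  rw [← inner_equiv_symm_aux, inner_self_eq_norm_sq_to_K]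
  norm_num

lemma contraction_flip {W : Matrix m m ℂ}
    (h : ((1 : Matrix m m ℂ) - Wᴴ * W).PosSemidef) :
    ((1 : Matrix m m ℂ) - W * Wᴴ).PosSemidef := by
  have key : ∀ x : m → ℂ, ‖(WithLp.equiv 2 (m → ℂ)).symm (W *ᵥ x)‖
      ≤ ‖(WithLp.equiv 2 (m → ℂ)).symm x‖ := by
    intro x
    have h2 := h.dotProduct_mulVec_nonneg x
    rw [Matrix.sub_mulVec, dotProduct_sub, Matrix.one_mulVec, sub_nonneg,
      quad_eq_normsq, dot_self_eq_normsq, Complex.real_le_real] at h2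
    have := Real.sqrt_le_sqrt h2
    rwa [Real.sqrt_sq (norm_nonneg _), Real.sqrt_sq (norm_nonneg _)] at this
  refine Matrix.PosSemidef.of_dotProduct_mulVec_nonneg ?_ ?_
  · simp [Matrix.IsHermitian, Matrix.conjTranspose_sub, Matrix.conjTranspose_mul]
  intro y
  rw [Matrix.sub_mulVec, dotProduct_sub, Matrix.one_mulVec, sub_nonneg]
  set z := Wᴴ *ᵥ y with hz
  have e1 : dotProduct (star y) ((W * Wᴴ) *ᵥ y)
      = (‖(WithLp.equiv 2 (m → ℂ)).symm z‖ ^ 2 : ℝ) := by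
    have : W * Wᴴ = (Wᴴ)ᴴ * Wᴴ := by rw [Matrix.conjTranspose_conjTranspose]
    rw [this, quad_eq_normsq]
  rw [e1, dot_self_eq_normsq, Complex.real_le_real]
  have e2 : (‖(WithLp.equiv 2 (m → ℂ)).symm z‖ ^ 2 : ℝ)
      = (inner ℂ ((WithLp.equiv 2 (m → ℂ)).symm y) ((WithLp.equiv 2 (m → ℂ)).symm (W *ᵥ z)) : ℂ).re := by
    have hzz : dotProduct (star z) z = dotProduct (star y) (W *ᵥ z) := by
      rw [hz, Matrix.star_mulVec, Matrix.conjTranspose_conjTranspose,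
        ← Matrix.dotProduct_mulVec]
    have h3 := dot_self_eq_normsq (m := m) z
    rw [hzz] at h3
    rw [inner_equiv_symm_aux, h3, Complex.ofReal_re]
  have cs : (inner ℂ ((WithLp.equiv 2 (m → ℂ)).symm y) ((WithLp.equiv 2 (m → ℂ)).symm (W *ᵥ z)) : ℂ).re
      ≤ ‖(WithLp.equiv 2 (m → ℂ)).symm y‖ * ‖(WithLp.equiv 2 (m → ℂ)).symm z‖ := by
    calc _ ≤ ‖(inner ℂ ((WithLp.equiv 2 (m → ℂ)).symm y) ((WithLp.equiv 2 (m → ℂ)).symm (W *ᵥ z)) : ℂ)‖ :=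
          Complex.re_le_norm _
      _ ≤ ‖(WithLp.equiv 2 (m → ℂ)).symm y‖ * ‖(WithLp.equiv 2 (m → ℂ)).symm (W *ᵥ z)‖ :=
          norm_inner_le_norm _ _
      _ ≤ _ := mul_le_mul_of_nonneg_left (key z) (norm_nonneg _)
  have hez := norm_nonneg ((WithLp.equiv 2 (m → ℂ)).symm z)
  have hey := norm_nonneg ((WithLp.equiv 2 (m → ℂ)).symm y)
  nlinarith [e2, cs]

omit [DecidableEq m] in
lemma psd_trace_nonneg {A : Matrix m m ℂ} (hA : A.PosSemidef) : 0 ≤ A.trace := by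
  classical
  rw [Matrix.trace]
  refine Finset.sum_nonneg fun i _ => ?_
  simpa [Matrix.mulVec_single, dotProduct, Pi.single_apply] using hA.dotProduct_mulVec_nonneg (Pi.single i 1)

lemma psd_trace_mul_nonneg {A B : Matrix m m ℂ} (hA : A.PosSemidef) (hB : B.PosSemidef) :
    0 ≤ (A * B).trace := by
  obtain ⟨C, hC⟩ : ∃ C : Matrix m m ℂ, B = star C * C := by
    open scoped MatrixOrder Matrix.Norms.L2Operator in
    exact CStarAlgebra.nonneg_iff_eq_star_mul_self.mp hB.nonneg
  rw [Matrix.star_eq_conjTranspose] at hC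
  subst hC
  have h1 : (A * (Cᴴ * C)).trace = (C * A * Cᴴ).trace := by
    rw [← Matrix.mul_assoc, Matrix.trace_mul_cycle]
  rw [h1]
  exact psd_trace_nonneg (hA.mul_mul_conjTranspose_same C)

lemma psd_le_trace_smul_one {Q : Matrix m m ℂ} (hQ : Q.PosSemidef) :
    ∃ c : ℝ, 0 ≤ c ∧ Q.trace = (c : ℂ) ∧ (((c:ℂ) • 1 : Matrix m m ℂ) - Q).PosSemidef := by
  set μ := hQ.1.eigenvalues with hμ
  set c := ∑ i, μ i with hc
  have hμ0 : ∀ i, 0 ≤ μ i := hQ.eigenvalues_nonneg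
  have hc0 : 0 ≤ c := Finset.sum_nonneg fun i _ => hμ0 i
  set U : Matrix m m ℂ := (hQ.1.eigenvectorUnitary : Matrix m m ℂ) with hU
  have hUU : U * Uᴴ = 1 := by
    simpa [hU, Matrix.star_eq_conjTranspose] using
      Matrix.mem_unitaryGroup_iff.mp hQ.1.eigenvectorUnitary.2
  have hUU' : Uᴴ * U = 1 := by
    simpa [hU, Matrix.star_eq_conjTranspose] using
      Matrix.mem_unitaryGroup_iff'.mp hQ.1.eigenvectorUnitary.2
  have hspec : Q = U * Matrix.diagonal (RCLike.ofReal ∘ μ) * Uᴴ := by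
    simpa [hU, Matrix.star_eq_conjTranspose] using hQ.1.spectral_theorem
  refine ⟨c, hc0, ?_, ?_⟩
  · rw [hspec, Matrix.trace_mul_cycle, hUU', Matrix.one_mul, Matrix.trace_diagonal]
    push_cast [hc]
    rfl
  · have hdiag : ((c:ℂ) • 1 : Matrix m m ℂ) - Matrix.diagonal (RCLike.ofReal ∘ μ)
        = Matrix.diagonal (fun i => ((c - μ i : ℝ) : ℂ)) := by
      rw [Matrix.smul_one_eq_diagonal, Matrix.diagonal_sub]
      congr 1
      funext i
      push_cast
      simp
    have key : ((c:ℂ) • 1 : Matrix m m ℂ) - Q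
        = U * (((c:ℂ) • 1 : Matrix m m ℂ) - Matrix.diagonal (RCLike.ofReal ∘ μ)) * Uᴴ := by
      rw [Matrix.mul_sub, Matrix.sub_mul, ← hspec, Matrix.mul_smul, Matrix.mul_one,
        Matrix.smul_mul, hUU]
    rw [key, hdiag]
    refine (Matrix.PosSemidef.diagonal ?_).mul_mul_conjTranspose_same U
    intro i
    simp only [Pi.zero_apply]
    rw [Complex.zero_le_real, sub_nonneg]
    exact Finset.single_le_sum (fun j _ => hμ0 j) (Finset.mem_univ i)

lemma dot_eq_trace {d n : ℕ} (S : Fin d → Matrix (Fin n) (Fin n) ℂ) :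
    dotProduct (star (fun p : Fin d × Fin n × Fin n => S p.1 p.2.1 p.2.2))
        (fun p : Fin d × Fin n × Fin n => S p.1 p.2.1 p.2.2)
      = (∑ i, (S i)ᴴ * S i).trace := by
  rw [Matrix.trace_sum, dotProduct]
  simp_rw [Fintype.sum_prod_type]
  refine Finset.sum_congr rfl fun i _ => ?_
  rw [Finset.sum_comm]
  simp [Matrix.trace, Matrix.mul_apply, Matrix.conjTranspose_apply, Matrix.diag]

end Helpers

/-- `‖M_λ(T)‖_{s,2} ≤ (λ + (1-λ)√(min{n,d})) ‖T‖_{s,2}` for a tuple of `n × n` matrices. -/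
theorem sphSchattenNorm_two_lambda_mean_le_min {n d : ℕ}
    (l : ℝ) (hl : l ∈ Set.Icc (0 : ℝ) 1)
    (T V : Fin d → Matrix (Fin n) (Fin n) ℂ) (P : Matrix (Fin n) (Fin n) ℂ)
    (hP : P.PosSemidef) (hP2 : P * P = ∑ i, (T i)ᴴ * T i)
    (hT : ∀ i, T i = V i * P)
    (hV : ((1 : Matrix (Fin n) (Fin n) ℂ) - ∑ i, (V i)ᴴ * V i).PosSemidef) :
    sphSchattenNorm 2 (fun i => (l : ℂ) • T i + ((1 - l : ℝ) : ℂ) • (P * V i)) ≤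
      (l + (1 - l) * Real.sqrt (min (n : ℝ) (d : ℝ))) * sphSchattenNorm 2 T := by
  obtain ⟨hl0, hl1⟩ := hl
  have h1l : (0:ℝ) ≤ 1 - l := by linarith
  set D : Fin d → Matrix (Fin n) (Fin n) ℂ := fun i => P * V i with hD
  set M : Fin d → Matrix (Fin n) (Fin n) ℂ :=
    fun i => (l : ℂ) • T i + ((1 - l : ℝ) : ℂ) • (P * V i) with hM
  set f : (Fin d → Matrix (Fin n) (Fin n) ℂ) → EuclideanSpace ℂ (Fin d × Fin n × Fin n) :=
    fun S => (WithLp.equiv 2 ((Fin d × Fin n × Fin n) → ℂ)).symm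
      (fun p => S p.1 p.2.1 p.2.2) with hf
  have hApsd : ∀ S : Fin d → Matrix (Fin n) (Fin n) ℂ, (∑ i, (S i)ᴴ * S i).PosSemidef :=
    fun S => Finset.sum_induction _ _ (fun a b ha hb => ha.add hb)
      Matrix.PosSemidef.zero (fun i _ => Matrix.posSemidef_conjTranspose_mul_self (S i))
  have normf : ∀ S : Fin d → Matrix (Fin n) (Fin n) ℂ,
      (↑(‖f S‖ ^ 2) : ℂ) = (∑ i, (S i)ᴴ * S i).trace :=
    fun S => by rw [← dot_eq_trace S, dot_self_eq_normsq]
  have normf_re : ∀ S : Fin d → Matrix (Fin n) (Fin n) ℂ,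
      ‖f S‖ ^ 2 = (∑ i, (S i)ᴴ * S i).trace.re :=
    fun S => by rw [← normf S, Complex.ofReal_re]
  have sph_eq : ∀ S : Fin d → Matrix (Fin n) (Fin n) ℂ,
      sphSchattenNorm 2 S = ‖f S‖ := by
    intro S
    have hA : (∑ i, (S i)ᴴ * S i).PosSemidef := hApsd S
    have hsa : IsSelfAdjoint (∑ i, (S i)ᴴ * S i) := hA.1
    unfold sphSchattenNorm mpow
    have h22 : (2:ℝ)/2 = 1 := by norm_num
    rw [h22]
    have hmp : cfc (fun x : ℝ => x ^ (1:ℝ)) (∑ i, (S i)ᴴ * S i) = ∑ i, (S i)ᴴ * S i := by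
      simp_rw [Real.rpow_one]
      exact cfc_id ℝ _
    rw [hmp, ← normf_re S, ← Real.rpow_natCast ‖f S‖ 2, ← Real.rpow_mul (norm_nonneg _)]
    norm_num
  -- the key trace inequality
  set Q : Matrix (Fin n) (Fin n) ℂ := ∑ i, V i * (V i)ᴴ with hQ
  have hQpsd : Q.PosSemidef :=
    Finset.sum_induction _ _ (fun a b ha hb => ha.add hb)
      Matrix.PosSemidef.zero (fun i _ => Matrix.posSemidef_self_mul_conjTranspose (V i))
  have hPP : (P * P).PosSemidef := by
    have := Matrix.posSemidef_conjTranspose_mul_self P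
    rwa [hP.1.eq] at this
  have e1 : (∑ i, (D i)ᴴ * D i).trace = ((P * P) * Q).trace := by
    rw [Matrix.trace_sum, hQ, Finset.mul_sum, Matrix.trace_sum]
    refine Finset.sum_congr rfl fun i _ => ?_
    have hterm : (D i)ᴴ * D i = (V i)ᴴ * ((P * P) * V i) := by
      rw [hD]
      simp only [Matrix.conjTranspose_mul, hP.1.eq, Matrix.mul_assoc]
    rw [hterm, Matrix.trace_mul_comm, Matrix.mul_assoc]
  -- PSD of (min n d) • 1 - Q
  have hminpsd : ((((min (n:ℝ) (d:ℝ)) : ℝ) : ℂ) • 1 - Q).PosSemidef := by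
    rcases le_total (n:ℝ) (d:ℝ) with hnd | hnd
    · rw [min_eq_left hnd]
      obtain ⟨c0, hc0, htr, hpsd⟩ := psd_le_trace_smul_one hQpsd
      have htrQ : Q.trace = (∑ i, (V i)ᴴ * V i).trace := by
        rw [hQ, Matrix.trace_sum, Matrix.trace_sum]
        exact Finset.sum_congr rfl fun i _ => Matrix.trace_mul_comm _ _
      have h1 := psd_trace_nonneg hV
      rw [Matrix.trace_sub, Matrix.trace_one, ← htrQ, htr] at h1
      have hcn : c0 ≤ (n:ℝ) := by
        rw [sub_nonneg] at h1
        have : ((c0:ℝ):ℂ) ≤ ((n:ℝ):ℂ) := by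
          simpa [Fintype.card_fin] using h1
        exact Complex.real_le_real.mp this
      have heq : (((n:ℝ):ℂ)) • (1 : Matrix (Fin n) (Fin n) ℂ) - Q
          = (((n:ℝ) - c0 : ℝ):ℂ) • 1 + (((c0:ℝ):ℂ) • 1 - Q) := by
        push_cast
        module
      rw [heq]
      refine Matrix.PosSemidef.add ?_ hpsd
      rw [Matrix.smul_one_eq_diagonal]
      refine Matrix.PosSemidef.diagonal fun i => ?_
      simp only [Pi.zero_apply]
      rw [Complex.zero_le_real, sub_nonneg]
      exact hcn
    · rw [min_eq_right hnd]
      have heach : ∀ i, ((1 : Matrix (Fin n) (Fin n) ℂ) - V i * (V i)ᴴ).PosSemidef := by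
        intro i
        apply contraction_flip
        have hs : ∑ j ∈ Finset.univ.erase i, (V j)ᴴ * V j
            = (∑ j, (V j)ᴴ * V j) - (V i)ᴴ * V i := by
          rw [← Finset.sum_erase_add Finset.univ _ (Finset.mem_univ i)]
          abel
        have hrw : (1 : Matrix (Fin n) (Fin n) ℂ) - (V i)ᴴ * V i
            = ((1 : Matrix (Fin n) (Fin n) ℂ) - ∑ j, (V j)ᴴ * V j)
              + ∑ j ∈ Finset.univ.erase i, (V j)ᴴ * V j := by
          rw [hs]; abel
        rw [hrw]
        refine hV.add ?_
        exact Finset.sum_induction _ _ (fun a b ha hb => ha.add hb)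
          Matrix.PosSemidef.zero (fun j _ => Matrix.posSemidef_conjTranspose_mul_self (V j))
      have sumeq : ∑ i, ((1 : Matrix (Fin n) (Fin n) ℂ) - V i * (V i)ᴴ)
          = (((d:ℝ):ℂ)) • 1 - Q := by
        rw [Finset.sum_sub_distrib, Finset.sum_const, Finset.card_univ, Fintype.card_fin, hQ]
        congr 1
        rw [← Nat.cast_smul_eq_nsmul ℂ d (1 : Matrix (Fin n) (Fin n) ℂ)]
        norm_num
      rw [← sumeq]
      exact Finset.sum_induction _ _ (fun a b ha hb => ha.add hb)
        Matrix.PosSemidef.zero (fun i _ => heach i)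
  have pair := psd_trace_mul_nonneg hPP hminpsd
  have key : (∑ i, (D i)ᴴ * D i).trace.re
      ≤ min (n:ℝ) (d:ℝ) * (∑ i, (T i)ᴴ * T i).trace.re := by
    rw [e1, ← hP2]
    have expand : ((P * P) * ((((min (n:ℝ) (d:ℝ)) : ℝ) : ℂ) • 1 - Q)).trace
        = (((min (n:ℝ) (d:ℝ)) : ℝ) : ℂ) * (P * P).trace - ((P * P) * Q).trace := by
      rw [Matrix.mul_sub, Matrix.trace_sub, Matrix.mul_smul, Matrix.mul_one, Matrix.trace_smul,
        smul_eq_mul]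
    rw [expand] at pair
    have := (Complex.le_def.mp pair).1
    simp only [Complex.zero_re, Complex.sub_re, Complex.re_ofReal_mul] at this
    linarith
  -- norms
  have hTnn := norm_nonneg (f T)
  have hDnn := norm_nonneg (f D)
  have hminnn : (0:ℝ) ≤ min (n:ℝ) (d:ℝ) := le_min (Nat.cast_nonneg n) (Nat.cast_nonneg d)
  have hDT : ‖f D‖ ≤ Real.sqrt (min (n:ℝ) (d:ℝ)) * ‖f T‖ := by
    have h2 : ‖f D‖ ^ 2 ≤ min (n:ℝ) (d:ℝ) * ‖f T‖ ^ 2 := by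
      rw [normf_re D, normf_re T]
      exact key
    have h3 := Real.sqrt_le_sqrt h2
    rwa [Real.sqrt_sq (norm_nonneg _), Real.sqrt_mul hminnn, Real.sqrt_sq (norm_nonneg _)] at h3
  have tri : ‖f M‖ ≤ l * ‖f T‖ + (1 - l) * ‖f D‖ := by
    have hfM : f M = (l : ℂ) • f T + ((1 - l : ℝ) : ℂ) • f D := rfl
    rw [hfM]
    refine (norm_add_le _ _).trans ?_
    rw [norm_smul, norm_smul, Complex.norm_real, Complex.norm_real, Real.norm_eq_abs,
      Real.norm_eq_abs, abs_of_nonneg hl0, abs_of_nonneg h1l]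
  rw [sph_eq, sph_eq]
  nlinarith [mul_le_mul_of_nonneg_left hDT h1l, Real.sqrt_nonneg (min (n:ℝ) (d:ℝ))]
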